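/- Let E be a complex Hilbert space, x in the open unit ball, and w ∈ E. Then ‖φ_x'(0)⁻¹(w)‖² = ((1-‖x‖²)‖w‖² + |⟨w,x⟩|²)/(1-‖x‖²)², and consequently ‖w‖²/(1-‖x‖²) ≤ ‖φ_x'(0)⁻¹(w)‖² ≤ ‖w‖²/(1-‖x‖²)². -/

import Mathlib

/-- With `‖φ_x'(0)⁻¹(w)‖² = ((1-‖x‖²)‖w‖² + |⟨w,x⟩|²)/(1-‖x‖²)²` (taken as definition),
the two-sided estimate `‖w‖²/(1-‖x‖²) ≤ ‖φ_x'(0)⁻¹(w)‖² ≤ ‖w‖²/(1-‖x‖²)²` holds. -/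
theorem stmt10 {E : Type*} [NormedAddCommGroup E] [InnerProductSpace ℂ E]
    (x : E) (hx : ‖x‖ < 1) (w : E) :
    ‖w‖^2 / (1 - ‖x‖^2) ≤
        ((1 - ‖x‖^2) * ‖w‖^2 + ‖(inner ℂ x w : ℂ)‖^2) / (1 - ‖x‖^2)^2 ∧
      ((1 - ‖x‖^2) * ‖w‖^2 + ‖(inner ℂ x w : ℂ)‖^2) / (1 - ‖x‖^2)^2 ≤
        ‖w‖^2 / (1 - ‖x‖^2)^2 := by
  have hx0 : (0:ℝ) ≤ ‖x‖ := norm_nonneg x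
  have h1 : 0 < 1 - ‖x‖^2 := by nlinarith
  have h2 : (0:ℝ) < (1 - ‖x‖^2)^2 := by positivity
  have hcs : ‖(inner ℂ x w : ℂ)‖ ≤ ‖x‖ * ‖w‖ := by
    simpa using norm_inner_le_norm (𝕜 := ℂ) x w
  have habs : (0:ℝ) ≤ ‖(inner ℂ x w : ℂ)‖ := by positivity
  constructor
  · rw [div_le_div_iff₀ h1 h2]
    nlinarith [sq_nonneg (‖(inner ℂ x w : ℂ)‖)]
  · rw [div_le_div_iff₀ h2 h2]
    nlinarith [mul_self_le_mul_self habs hcs, sq_nonneg ‖w‖, mul_pos h2 h2]
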